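/- Let P be a regular p-gon inscribed in a circle of radius 1, and let S be a set of pairwise non-intersecting regular p-gons each inscribed in a circle of radius 1, all of which intersect P. Then |S| ≤ ⌈18π / (p·sin(2π/p))⌉. -/

import Mathlib

open Real MeasureTheory Set intervalIntegral

/-- The regular `p`-gon inscribed in the circle of radius 1 centered at `c`,
rotated by angle `θ`: the convex hull of the `p` points at angles
`2πk/p + θ` on the unit circle around `c`. -/
noncomputable def regularPolygon (p : ℕ) (c : EuclideanSpace ℝ (Fin 2)) (θ : ℝ) :
    Set (EuclideanSpace ℝ (Fin 2)) :=
  convexHull ℝ {x | ∃ k : Fin p,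
    x = c + (WithLp.equiv 2 (Fin 2 → ℝ)).symm
      ![Real.cos (2 * Real.pi * k / p + θ), Real.sin (2 * Real.pi * k / p + θ)]}

local notation "E2" => EuclideanSpace ℝ (Fin 2)

namespace RegPolyAux

noncomputable def pt (a : ℝ) : E2 := (WithLp.equiv 2 (Fin 2 → ℝ)).symm ![Real.cos a, Real.sin a]

@[simp] lemma pt_zero (a : ℝ) : pt a 0 = Real.cos a := rfl
@[simp] lemma pt_one (a : ℝ) : pt a 1 = Real.sin a := rfl

lemma pt_congr {a b : ℝ} (hc : Real.cos a = Real.cos b) (hsi : Real.sin a = Real.sin b) :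
    pt a = pt b := by
  unfold pt; rw [hc, hsi]

lemma norm_pt (a : ℝ) : ‖pt a‖ = 1 := by
  rw [EuclideanSpace.norm_eq]
  simp [Fin.sum_univ_two, Real.sin_sq_add_cos_sq, Real.cos_sq_add_sin_sq]

def cross (x y : E2) : ℝ := x 0 * y 1 - x 1 * y 0

lemma cross_pt (a b : ℝ) : cross (pt a) (pt b) = Real.sin (b - a) := by
  simp [cross, Real.sin_sub]; ring

lemma cross_repr_left (u w d : E2) (a b : ℝ) (h : d = a • u + b • w) :
    cross d w = a * cross u w := by
  subst h
  show ((a • u + b • w) 0) * w 1 - ((a • u + b • w) 1) * w 0 = _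
  show (a * u 0 + b * w 0) * w 1 - (a * u 1 + b * w 1) * w 0 = _
  simp only [cross]; ring

lemma cross_repr_right (u w d : E2) (a b : ℝ) (h : d = a • u + b • w) :
    cross u d = b * cross u w := by
  subst h
  show u 0 * (a * u 1 + b * w 1) - u 1 * (a * u 0 + b * w 0) = _
  simp only [cross]; ring

lemma cross_smul_add_left (a b : ℝ) (y z v : E2) :
    cross (a • y + b • z) v = a * cross y v + b * cross z v := by
  show (a * y 0 + b * z 0) * v 1 - (a * y 1 + b * z 1) * v 0 = _
  simp only [cross]; ring

lemma cross_smul_add_right (a b : ℝ) (y z v : E2) :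
    cross v (a • y + b • z) = a * cross v y + b * cross v z := by
  show v 0 * (a * y 1 + b * z 1) - v 1 * (a * y 0 + b * z 0) = _
  simp only [cross]; ring

lemma repr_of_cross_ne (u w d : E2) (hs : cross u w ≠ 0) :
    d = (cross d w / cross u w) • u + (cross u d / cross u w) • w := by
  ext i
  fin_cases i
  · change d 0 = cross d w / cross u w * u 0 + cross u d / cross u w * w 0
    simp only [cross] at hs ⊢; rw [div_mul_eq_mul_div, div_mul_eq_mul_div, ← add_div, eq_div_iff hs]; ring
  · change d 1 = cross d w / cross u w * u 1 + cross u d / cross u w * w 1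
    simp only [cross] at hs ⊢; rw [div_mul_eq_mul_div, div_mul_eq_mul_div, ← add_div, eq_div_iff hs]; ring

noncomputable def Lmap (u w : E2) : E2 →ₗ[ℝ] E2 where
  toFun x := x 0 • u + x 1 • w
  map_add' x y := by
    show ((x + y) 0) • u + ((x + y) 1) • w = _
    show (x 0 + y 0) • u + (x 1 + y 1) • w = _
    module
  map_smul' r x := by
    show ((r • x) 0) • u + ((r • x) 1) • w = _
    show (r * x 0) • u + (r * x 1) • w = _
    simp only [RingHom.id_apply]
    module

lemma det_Lmap (u w : E2) : LinearMap.det (Lmap u w) = cross u w := by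
  let b := (EuclideanSpace.basisFun (Fin 2) ℝ).toBasis
  rw [← LinearMap.det_toMatrix b]
  rw [Matrix.det_fin_two]
  have h : ∀ i j : Fin 2, LinearMap.toMatrix b b (Lmap u w) i j = (Lmap u w) (b j) i := by
    intro i j
    rw [LinearMap.toMatrix_apply]
    rfl
  rw [h, h, h, h]
  have hb : ∀ j : Fin 2, b j = EuclideanSpace.single j 1 := by
    intro j
    simp [b, OrthonormalBasis.coe_toBasis, EuclideanSpace.basisFun_apply]
  have e0 : (b 0 : E2) 0 = 1 := by rw [hb]; simp
  have e1 : (b 0 : E2) 1 = 0 := by rw [hb]; simp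
  have e2 : (b 1 : E2) 0 = 0 := by rw [hb]; simp
  have e3 : (b 1 : E2) 1 = 1 := by rw [hb]; simp
  show ((b 0) 0 • u + (b 0) 1 • w) 0 * ((b 1) 0 • u + (b 1) 1 • w) 1 -
      ((b 1) 0 • u + (b 1) 1 • w) 0 * ((b 0) 0 • u + (b 0) 1 • w) 1 = cross u w
  rw [e0, e1, e2, e3]
  show (1 * u 0 + 0 * w 0) * (0 * u 1 + 1 * w 1) - (0 * u 0 + 1 * w 0) * (1 * u 1 + 0 * w 1) = _
  simp [cross]; ring

lemma measurable_coord (i : Fin 2) : Measurable fun x : E2 => x i :=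
  (measurable_pi_apply i).comp (MeasurableEquiv.toLp 2 (Fin 2 → ℝ)).symm.measurable

def stdTri : Set E2 := {x | 0 < x 0 ∧ 0 < x 1 ∧ x 0 + x 1 < 1}

lemma volume_stdTri : volume stdTri = ENNReal.ofReal (1/2) := by
  have hprod : volume {p : ℝ × ℝ | 0 < p.1 ∧ 0 < p.2 ∧ p.1 + p.2 < 1}
      = ENNReal.ofReal (1/2) := by
    have hset : {p : ℝ × ℝ | 0 < p.1 ∧ 0 < p.2 ∧ p.1 + p.2 < 1}
        = regionBetween (fun _ => (0:ℝ)) (fun x => 1 - x) (Ioo 0 1) := by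
      ext ⟨a, b⟩
      simp only [regionBetween, mem_setOf_eq, mem_Ioo]
      constructor
      · rintro ⟨h1, h2, h3⟩; exact ⟨⟨h1, by linarith⟩, h2, by linarith⟩
      · rintro ⟨⟨h1, h2⟩, h3, h4⟩; exact ⟨h1, h3, by linarith⟩
    rw [hset, Measure.volume_eq_prod, volume_regionBetween_eq_integral]
    · congr 1
      simp only [Pi.sub_apply]
      rw [← MeasureTheory.integral_Ioc_eq_integral_Ioo,
        ← intervalIntegral.integral_of_le (by norm_num : (0:ℝ) ≤ 1)]
      have : (fun x : ℝ => 1 - x - 0) = fun x : ℝ => 1 - x := by funext x; ring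
      rw [show (∫ (x : ℝ) in (0:ℝ)..1, 1 - x - 0) = ∫ (x : ℝ) in (0:ℝ)..1, 1 - x from by
        rw [this]]
      rw [intervalIntegral.integral_sub intervalIntegrable_const
        intervalIntegrable_id]
      simp [integral_id]
      norm_num
    · exact (continuous_const.continuousOn).integrableOn_compact isCompact_Icc |>.mono_set
        Ioo_subset_Icc_self
    · exact ((continuous_const.sub continuous_id).continuousOn).integrableOn_compact
        isCompact_Icc |>.mono_set Ioo_subset_Icc_self
    · exact measurableSet_Ioo
    · intro x hx; simp only [mem_Ioo] at hx; linarith [hx.2]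
  have h1 : stdTri = (MeasurableEquiv.toLp 2 (Fin 2 → ℝ)).symm ⁻¹'
      ((MeasurableEquiv.finTwoArrow) ⁻¹' {p : ℝ × ℝ | 0 < p.1 ∧ 0 < p.2 ∧ p.1 + p.2 < 1}) := rfl
  rw [h1, (EuclideanSpace.volume_preserving_symm_measurableEquiv_toLp (Fin 2)).measure_preimage,
    (volume_preserving_finTwoArrow ℝ).measure_preimage]
  · exact hprod
  · exact (measurableSet_lt measurable_const measurable_fst |>.inter
      ((measurableSet_lt measurable_const measurable_snd).inter
        (measurableSet_lt (measurable_fst.add measurable_snd) measurable_const))).nullMeasurableSet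
  · exact ((MeasurableEquiv.finTwoArrow.measurable (by
      exact (measurableSet_lt measurable_const measurable_fst |>.inter
        ((measurableSet_lt measurable_const measurable_snd).inter
          (measurableSet_lt (measurable_fst.add measurable_snd) measurable_const)))))).nullMeasurableSet

def secTri (c u w : E2) : Set E2 :=
  {x | 0 < cross (x - c) w ∧ 0 < cross u (x - c) ∧
    cross (x - c) w + cross u (x - c) < cross u w}

lemma secTri_mem_iff {c u w x : E2} (hs : 0 < cross u w) :
    x ∈ secTri c u w ↔ ∃ a b : ℝ, 0 < a ∧ 0 < b ∧ a + b < 1 ∧ x = c + (a • u + b • w) := by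
  constructor
  · rintro ⟨h1, h2, h3⟩
    refine ⟨cross (x - c) w / cross u w, cross u (x - c) / cross u w,
      div_pos h1 hs, div_pos h2 hs, ?_, ?_⟩
    · rw [← add_div, div_lt_one hs]; exact h3
    · have := repr_of_cross_ne u w (x - c) hs.ne'
      rw [← this]; abel
  · rintro ⟨a, b, ha, hb, hab, rfl⟩
    have hd : c + (a • u + b • w) - c = a • u + b • w := by abel
    refine ⟨?_, ?_, ?_⟩ <;> rw [hd]
    · rw [cross_repr_left u w _ a b rfl]; positivity
    · rw [cross_repr_right u w _ a b rfl]; positivity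
    · rw [cross_repr_left u w _ a b rfl, cross_repr_right u w _ a b rfl]
      nlinarith

lemma secTri_eq_image (c u w : E2) (hs : 0 < cross u w) :
    secTri c u w = (fun y => c + y) '' (Lmap u w '' stdTri) := by
  ext x
  rw [secTri_mem_iff hs]
  constructor
  · rintro ⟨a, b, ha, hb, hab, rfl⟩
    refine ⟨a • u + b • w, ⟨(WithLp.equiv 2 (Fin 2 → ℝ)).symm ![a, b], ⟨ha, hb, hab⟩, rfl⟩, rfl⟩
  · rintro ⟨-, ⟨y, ⟨hy0, hy1, hy2⟩, rfl⟩, rfl⟩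
    exact ⟨y 0, y 1, hy0, hy1, hy2, rfl⟩

lemma measurableSet_secTri (c u w : E2) : MeasurableSet (secTri c u w) := by
  have m1 : Measurable fun x : E2 => cross (x - c) w :=
    (((measurable_coord 0).sub measurable_const).mul measurable_const).sub
      (((measurable_coord 1).sub measurable_const).mul measurable_const)
  have m2 : Measurable fun x : E2 => cross u (x - c) :=
    (measurable_const.mul ((measurable_coord 1).sub measurable_const)).sub
      (measurable_const.mul ((measurable_coord 0).sub measurable_const))
  exact (measurableSet_lt measurable_const m1).inter
    ((measurableSet_lt measurable_const m2).inter
      (measurableSet_lt (m1.add m2) measurable_const))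

lemma volume_secTri (c u w : E2) (hs : 0 < cross u w) :
    volume (secTri c u w) = ENNReal.ofReal (cross u w / 2) := by
  rw [secTri_eq_image c u w hs]
  have himg : (fun y => c + y) '' (Lmap u w '' stdTri)
      = (fun y => -c + y) ⁻¹' (Lmap u w '' stdTri) := by
    ext x
    simp only [mem_image, mem_preimage]
    constructor
    · rintro ⟨y, hy, rfl⟩; simpa using hy
    · intro h; exact ⟨-c + x, h, by abel⟩
  rw [himg, measure_preimage_add, Measure.addHaar_image_linearMap, det_Lmap,
    abs_of_pos hs, volume_stdTri, ← ENNReal.ofReal_mul hs.le]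
  ring_nf

lemma secTri_subset (c u w : E2) (hs : 0 < cross u w) (s : Set E2)
    (hc : c ∈ convexHull ℝ s) (hu : c + u ∈ convexHull ℝ s) (hw : c + w ∈ convexHull ℝ s) :
    secTri c u w ⊆ convexHull ℝ s := by
  intro x hx
  rw [secTri_mem_iff hs] at hx
  obtain ⟨a, b, ha, hb, hab, rfl⟩ := hx
  have hconv : Convex ℝ (convexHull ℝ s) := convex_convexHull ℝ s
  have := hconv ((hconv hu hw (by positivity : (0:ℝ) ≤ a/(a+b)) (by positivity : (0:ℝ) ≤ b/(a+b))
    (by field_simp)) : (a/(a+b)) • (c + u) + (b/(a+b)) • (c + w) ∈ convexHull ℝ s) hc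
    (by positivity : (0:ℝ) ≤ a + b) (by linarith : (0:ℝ) ≤ 1 - (a+b)) (by ring)
  convert this using 1
  have hab0 : a + b ≠ 0 := by positivity
  rw [smul_add, smul_smul, smul_smul]
  field_simp
  module

lemma sin_nonpos_pi_two_pi {x : ℝ} (h1 : π ≤ x) (h2 : x ≤ 2*π) : Real.sin x ≤ 0 := by
  have h := Real.sin_nonneg_of_nonneg_of_le_pi (x := x - π) (by linarith) (by linarith)
  rw [Real.sin_sub_pi] at h
  linarith

lemma no_overlap (p : ℕ) (hp : 3 ≤ p) (m a b : ℝ) (hm1 : 1 ≤ m) (hm2 : m ≤ (p:ℝ) - 1)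
    (ha : 0 < a) (hb : 0 < b)
    (hA : 0 < a * Real.sin ((m+1) * (2*π/p)) + b * Real.sin (m * (2*π/p)))
    (hB : a * Real.sin (m * (2*π/p)) + b * Real.sin ((m-1) * (2*π/p)) < 0) : False := by
  have hp0 : (0:ℝ) < p := by positivity
  have hβ : 0 < 2*π/p := by positivity
  have hpβ : (p:ℝ) * (2*π/p) = 2*π := by field_simp
  rcases lt_or_ge 0 (Real.sin (m * (2*π/p))) with hsin | hsin
  · have hmπ : m * (2*π/p) < π := by
      by_contra h
      push_neg at h
      have : Real.sin (m * (2*π/p)) ≤ 0 := by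
        apply sin_nonpos_pi_two_pi h
        nlinarith
      linarith
    have h1 : 0 ≤ Real.sin ((m-1) * (2*π/p)) := by
      apply Real.sin_nonneg_of_nonneg_of_le_pi
      · nlinarith
      · nlinarith
    nlinarith
  · have hmπ : π ≤ m * (2*π/p) := by
      by_contra h
      push_neg at h
      have : 0 < Real.sin (m * (2*π/p)) := by
        apply Real.sin_pos_of_pos_of_lt_pi _ h
        nlinarith
      linarith
    have h1 : Real.sin ((m+1) * (2*π/p)) ≤ 0 := by
      apply sin_nonpos_pi_two_pi
      · nlinarith
      · nlinarith
    nlinarith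

lemma sum_exp_eq_zero (p : ℕ) (hp : 3 ≤ p) (θ : ℝ) :
    ∑ k ∈ Finset.range p, Complex.exp ((2 * Real.pi * k / p + θ : ℝ) * Complex.I) = 0 := by
  have hp0 : 0 < p := by omega
  have hp1 : 1 < p := by omega
  have hζ := Complex.isPrimitiveRoot_exp p hp0.ne'
  set ζ := Complex.exp (2 * Real.pi * Complex.I / p) with hζdef
  have hne1 : ζ ≠ 1 := hζ.ne_one hp1
  have hpow : ζ ^ p = 1 := hζ.pow_eq_one
  have hterm : ∀ k : ℕ, Complex.exp ((2 * Real.pi * k / p + θ : ℝ) * Complex.I)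
      = Complex.exp (θ * Complex.I) * ζ ^ k := by
    intro k
    rw [hζdef, ← Complex.exp_nat_mul, ← Complex.exp_add]
    congr 1
    push_cast
    have : (p:ℂ) ≠ 0 := by exact_mod_cast hp0.ne'
    field_simp
    ring
  simp_rw [hterm]
  rw [← Finset.mul_sum, geom_sum_eq hne1, hpow]
  simp

lemma sum_cos_eq_zero (p : ℕ) (hp : 3 ≤ p) (θ : ℝ) :
    ∑ k ∈ Finset.range p, Real.cos (2 * Real.pi * k / p + θ) = 0 := by
  have h2 := congrArg Complex.re (sum_exp_eq_zero p hp θ)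
  rw [Complex.re_sum] at h2
  simp only [Complex.exp_ofReal_mul_I_re] at h2
  exact h2

lemma sum_sin_eq_zero (p : ℕ) (hp : 3 ≤ p) (θ : ℝ) :
    ∑ k ∈ Finset.range p, Real.sin (2 * Real.pi * k / p + θ) = 0 := by
  have h2 := congrArg Complex.im (sum_exp_eq_zero p hp θ)
  rw [Complex.im_sum] at h2
  simp only [Complex.exp_ofReal_mul_I_im] at h2
  exact h2

lemma polygon_eq (p : ℕ) (c : E2) (θ : ℝ) :
    regularPolygon p c θ
      = convexHull ℝ {x : E2 | ∃ k : Fin p, x = c + pt (2 * Real.pi * (k:ℕ) / p + θ)} := rfl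

noncomputable def evalAM (i : Fin 2) : E2 →+ ℝ :=
  { toFun := fun x => x i, map_zero' := rfl, map_add' := fun _ _ => rfl }

lemma center_mem (p : ℕ) (hp : 3 ≤ p) (c : E2) (θ : ℝ) :
    c ∈ convexHull ℝ {x : E2 | ∃ k : Fin p, x = c + pt (2 * Real.pi * (k:ℕ) / p + θ)} := by
  have hp0 : (0:ℝ) < p := by positivity
  have h : (Finset.univ : Finset (Fin p)).centerMass (fun _ => (1:ℝ))
      (fun k : Fin p => c + pt (2 * Real.pi * (k:ℕ) / p + θ))
      ∈ convexHull ℝ {x : E2 | ∃ k : Fin p, x = c + pt (2 * Real.pi * (k:ℕ) / p + θ)} :=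
    Finset.centerMass_mem_convexHull _ (fun i _ => zero_le_one) (by simpa using hp0)
      (fun i _ => ⟨i, rfl⟩)
  have hsumpt : (∑ k : Fin p, pt (2 * Real.pi * (k:ℕ) / p + θ)) = 0 := by
    ext i
    rw [show ((∑ k : Fin p, pt (2 * Real.pi * (k:ℕ) / p + θ)) i)
        = evalAM i (∑ k : Fin p, pt (2 * Real.pi * (k:ℕ) / p + θ)) from rfl]
    rw [map_sum]
    fin_cases i
    · have := sum_cos_eq_zero p hp θ
      rw [← Fin.sum_univ_eq_sum_range (fun k => Real.cos (2 * Real.pi * k / p + θ)) p] at this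
      exact this.trans rfl |>.trans rfl
    · have := sum_sin_eq_zero p hp θ
      rw [← Fin.sum_univ_eq_sum_range (fun k => Real.sin (2 * Real.pi * k / p + θ)) p] at this
      exact this.trans rfl |>.trans rfl
  have hsum : (∑ k : Fin p, (c + pt (2 * Real.pi * (k:ℕ) / p + θ))) = (p:ℝ) • c := by
    rw [Finset.sum_add_distrib, hsumpt, add_zero, Finset.sum_const, Finset.card_univ,
      Fintype.card_fin]
    rw [Nat.cast_smul_eq_nsmul]
  have hcm : (Finset.univ : Finset (Fin p)).centerMass (fun _ => (1:ℝ))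
      (fun k : Fin p => c + pt (2 * Real.pi * (k:ℕ) / p + θ)) = c := by
    rw [Finset.centerMass]
    simp only [one_smul, Finset.sum_const, Finset.card_univ, Fintype.card_fin, nsmul_eq_mul,
      mul_one]
    rw [hsum, smul_smul]
    rw [inv_mul_cancel₀ hp0.ne', one_smul]
  rwa [hcm] at h

section
variable (p : ℕ) (c : E2) (θ : ℝ)

noncomputable def uu (k : ℕ) : E2 := pt (2 * Real.pi * k / p + θ)

noncomputable def sec (k : ℕ) : Set E2 := secTri c (uu p θ k) (uu p θ (k+1))

lemma sin_beta_pos (hp : 3 ≤ p) : 0 < Real.sin (2 * π / p) := by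
  have hp0 : (0:ℝ) < p := by positivity
  have hp3 : (3:ℝ) ≤ p := by exact_mod_cast hp
  apply Real.sin_pos_of_pos_of_lt_pi
  · positivity
  · rw [div_lt_iff₀ hp0]
    nlinarith [Real.pi_pos]

lemma cross_uu (hp : 3 ≤ p) (k : ℕ) :
    cross (uu p θ k) (uu p θ (k+1)) = Real.sin (2 * π / p) := by
  rw [uu, uu, cross_pt]
  congr 1
  push_cast
  ring

lemma uu_p_eq (hp : 3 ≤ p) : uu p θ p = uu p θ 0 := by
  have hp0 : (p:ℝ) ≠ 0 := by positivity
  have harg : 2 * Real.pi * (p:ℝ) / p + θ = θ + 2 * π := by field_simp; ring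
  have harg0 : 2 * Real.pi * (0:ℕ) / p + θ = θ := by push_cast; ring
  rw [uu, uu, harg, harg0]
  exact pt_congr (Real.cos_add_two_pi θ) (Real.sin_add_two_pi θ)

lemma sec_subset (hp : 3 ≤ p) {k : ℕ} (hk : k < p) :
    sec p c θ k ⊆ regularPolygon p c θ := by
  rw [polygon_eq]
  have hs := sin_beta_pos p hp
  rw [← cross_uu p θ hp k] at hs
  apply secTri_subset _ _ _ hs _ (center_mem p hp c θ)
  · exact subset_convexHull ℝ _ ⟨⟨k, hk⟩, rfl⟩
  · rcases lt_or_eq_of_le (Nat.succ_le_of_lt hk) with h | h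
    · exact subset_convexHull ℝ _ ⟨⟨k+1, h⟩, rfl⟩
    · rw [show k+1 = p from h, uu_p_eq p θ hp]
      exact subset_convexHull ℝ _ ⟨⟨0, by omega⟩, by simp [uu]⟩

lemma sec_disjoint (hp : 3 ≤ p) {k j : ℕ} (hkj : k < j) (hjp : j < p) :
    sec p c θ k ∩ sec p c θ j = ∅ := by
  rw [eq_empty_iff_forall_notMem]
  rintro x ⟨hx1, hx2⟩
  have hs := sin_beta_pos p hp
  have hsk : 0 < cross (uu p θ k) (uu p θ (k+1)) := by rwa [cross_uu p θ hp k]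
  rw [sec, secTri_mem_iff hsk] at hx1
  obtain ⟨a, b, ha, hb, hab, hxeq⟩ := hx1
  obtain ⟨h1, h2, h3⟩ := hx2
  have hd : x - c = a • uu p θ k + b • uu p θ (k+1) := by rw [hxeq]; abel
  rw [hd] at h1 h2
  rw [cross_smul_add_left] at h1
  rw [cross_smul_add_right] at h2
  have e1 : cross (uu p θ k) (uu p θ (j+1))
      = Real.sin ((((j:ℝ) - (k:ℝ)) + 1) * (2*π/p)) := by
    rw [uu, uu, cross_pt]; congr 1; push_cast; ring
  have e2 : cross (uu p θ (k+1)) (uu p θ (j+1))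
      = Real.sin (((j:ℝ) - (k:ℝ)) * (2*π/p)) := by
    rw [uu, uu, cross_pt]; congr 1; push_cast; ring
  have e3 : cross (uu p θ j) (uu p θ k)
      = -Real.sin (((j:ℝ) - (k:ℝ)) * (2*π/p)) := by
    rw [uu, uu, cross_pt, ← Real.sin_neg]; congr 1; push_cast; ring
  have e4 : cross (uu p θ j) (uu p θ (k+1))
      = -Real.sin ((((j:ℝ) - (k:ℝ)) - 1) * (2*π/p)) := by
    rw [uu, uu, cross_pt, ← Real.sin_neg]; congr 1; push_cast; ring
  rw [e1, e2] at h1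
  rw [e3, e4] at h2
  have hjk : (k:ℝ) + 1 ≤ (j:ℝ) := by exact_mod_cast hkj
  have hjp' : (j:ℝ) ≤ (p:ℝ) - 1 := by
    have : (j:ℝ) + 1 ≤ (p:ℝ) := by exact_mod_cast hjp
    linarith
  exact no_overlap p hp ((j:ℝ) - (k:ℝ)) a b (by linarith) (by linarith) ha hb h1
    (by linarith)

lemma volume_polygon_lower (hp : 3 ≤ p) :
    ENNReal.ofReal (p * Real.sin (2 * π / p) / 2) ≤ volume (regularPolygon p c θ) := by
  have hs := sin_beta_pos p hp
  have hdisj : ((Finset.range p : Finset ℕ) : Set ℕ).PairwiseDisjoint (sec p c θ) := by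
    intro k hk j hj hne
    simp only [Finset.coe_range, mem_Iio] at hk hj
    rw [Function.onFun, disjoint_iff_inter_eq_empty]
    rcases lt_or_gt_of_ne hne with h | h
    · exact sec_disjoint p c θ hp h hj
    · rw [inter_comm]; exact sec_disjoint p c θ hp h hk
  have hmeas : ∀ k ∈ Finset.range p, MeasurableSet (sec p c θ k) :=
    fun k _ => measurableSet_secTri _ _ _
  have hunion : (⋃ k ∈ Finset.range p, sec p c θ k) ⊆ regularPolygon p c θ := by
    apply Set.iUnion₂_subset
    intro k hk
    exact sec_subset p c θ hp (Finset.mem_range.mp hk)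
  calc ENNReal.ofReal (p * Real.sin (2 * π / p) / 2)
      = ∑ k ∈ Finset.range p, volume (sec p c θ k) := by
        have : ∀ k ∈ Finset.range p, volume (sec p c θ k)
            = ENNReal.ofReal (Real.sin (2 * π / p) / 2) := by
          intro k _
          rw [sec, volume_secTri _ _ _ (by rwa [cross_uu p θ hp k]), cross_uu p θ hp k]
        rw [Finset.sum_congr rfl this, Finset.sum_const, Finset.card_range, nsmul_eq_mul]
        rw [← ENNReal.ofReal_natCast p, ← ENNReal.ofReal_mul (by positivity)]
        congr 1
        ring
    _ = volume (⋃ k ∈ Finset.range p, sec p c θ k) :=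
        (measure_biUnion_finset hdisj hmeas).symm
    _ ≤ volume (regularPolygon p c θ) := measure_mono hunion

end

lemma polygon_subset_ball (p : ℕ) (c : E2) (θ : ℝ) :
    regularPolygon p c θ ⊆ Metric.closedBall c 1 := by
  rw [polygon_eq]
  apply convexHull_min _ (convex_closedBall c 1)
  rintro x ⟨k, rfl⟩
  rw [Metric.mem_closedBall, dist_self_add_left, norm_pt]

lemma polygon_measurable (p : ℕ) (c : E2) (θ : ℝ) :
    MeasurableSet (regularPolygon p c θ) := by
  rw [polygon_eq]
  have hfin : ({x : E2 | ∃ k : Fin p, x = c + pt (2 * Real.pi * (k:ℕ) / p + θ)}).Finite := by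
    have : {x : E2 | ∃ k : Fin p, x = c + pt (2 * Real.pi * (k:ℕ) / p + θ)}
        = Set.range (fun k : Fin p => c + pt (2 * Real.pi * (k:ℕ) / p + θ)) := by
      ext x; simp [Set.mem_range, eq_comm]
    rw [this]
    exact Set.finite_range _
  exact (hfin.isCompact_convexHull ℝ).measurableSet


lemma volume_ball3 (c : E2) :
    volume (Metric.closedBall c 3) = ENNReal.ofReal (9 * π) := by
  rw [EuclideanSpace.volume_closedBall]
  have hcard : Fintype.card (Fin 2) = 2 := Fintype.card_fin 2
  rw [hcard]
  have h1 : ((2:ℕ):ℝ) / 2 + 1 = 2 := by norm_num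
  rw [h1]
  have h2 : Real.Gamma 2 = 1 := by
    rw [show (2:ℝ) = (1:ℕ) + 1 by norm_num, Real.Gamma_nat_eq_factorial]
    norm_num
  rw [h2]
  have h3 : Real.sqrt π ^ 2 = π := Real.sq_sqrt Real.pi_pos.le
  rw [h3]
  rw [← ENNReal.ofReal_pow (by norm_num : (0:ℝ) ≤ 3), ← ENNReal.ofReal_mul (by norm_num)]
  norm_num [mul_comm]


end RegPolyAux

open RegPolyAux in
/-- If a family of pairwise non-intersecting regular unit `p`-gons (each given
by a center and a rotation angle) all intersect a fixed regular unit `p`-gon,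
then the family has at most `⌈18π / (p·sin(2π/p))⌉` members. -/
theorem regularPolygon_packing_bound (p : ℕ) (hp : 3 ≤ p)
    (c : EuclideanSpace ℝ (Fin 2)) (θ : ℝ)
    (S : Finset (EuclideanSpace ℝ (Fin 2) × ℝ))
    (hint : ∀ q ∈ S, (regularPolygon p q.1 q.2 ∩ regularPolygon p c θ).Nonempty)
    (hdisj : ∀ q ∈ S, ∀ q' ∈ S, q ≠ q' →
      regularPolygon p q.1 q.2 ∩ regularPolygon p q'.1 q'.2 = ∅) :
    S.card ≤ ⌈18 * Real.pi / (p * Real.sin (2 * Real.pi / p))⌉₊ := by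
  have hp0 : (0:ℝ) < p := by positivity
  set s := Real.sin (2 * Real.pi / p) with hs_def
  have hs : 0 < s := by
    apply Real.sin_pos_of_pos_of_lt_pi
    · positivity
    · rw [div_lt_iff₀ hp0]
      have : (3:ℝ) ≤ p := by exact_mod_cast hp
      nlinarith [Real.pi_pos]
  -- each polygon in S is inside closedBall c 3
  have hball : ∀ q ∈ S, regularPolygon p q.1 q.2 ⊆ Metric.closedBall c 3 := by
    intro q hq
    obtain ⟨x, hx1, hx2⟩ := hint q hq
    have hxq : dist x q.1 ≤ 1 := polygon_subset_ball p q.1 q.2 hx1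
    have hxc : dist x c ≤ 1 := polygon_subset_ball p c θ hx2
    have hqc : dist q.1 c ≤ 2 :=
      (dist_triangle q.1 x c).trans (by rw [dist_comm q.1 x]; linarith)
    exact (polygon_subset_ball p q.1 q.2).trans
      (Metric.closedBall_subset_closedBall' (by linarith))
  have hPD : (↑S : Set (EuclideanSpace ℝ (Fin 2) × ℝ)).PairwiseDisjoint
      (fun q => regularPolygon p q.1 q.2) := by
    intro q hq q' hq' hne
    rw [Function.onFun, disjoint_iff_inter_eq_empty]
    exact hdisj q hq q' hq' hne
  have hsum : ∑ q ∈ S, volume (regularPolygon p q.1 q.2)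
      = volume (⋃ q ∈ S, regularPolygon p q.1 q.2) :=
    (measure_biUnion_finset hPD (fun q _ => polygon_measurable p q.1 q.2)).symm
  have hle : ∑ q ∈ S, volume (regularPolygon p q.1 q.2)
      ≤ ENNReal.ofReal (9 * π) := by
    rw [hsum, ← volume_ball3 c]
    exact measure_mono (Set.iUnion₂_subset hball)
  have hlow : (S.card : ENNReal) * ENNReal.ofReal ((p:ℝ) * s / 2)
      ≤ ∑ q ∈ S, volume (regularPolygon p q.1 q.2) := by
    rw [← nsmul_eq_mul]
    exact Finset.card_nsmul_le_sum S _ _ (fun q _ => volume_polygon_lower p q.1 q.2 hp)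
  have hENN : ENNReal.ofReal ((S.card : ℝ) * ((p:ℝ) * s / 2)) ≤ ENNReal.ofReal (9 * π) := by
    rw [ENNReal.ofReal_mul (by positivity), ENNReal.ofReal_natCast]
    exact le_trans hlow hle
  have hreal : (S.card : ℝ) * ((p:ℝ) * s / 2) ≤ 9 * π := by
    rwa [ENNReal.ofReal_le_ofReal_iff (by positivity)] at hENN
  have hfinal : (S.card : ℝ) ≤ 18 * π / ((p:ℝ) * s) := by
    rw [le_div_iff₀ (by positivity)]
    nlinarith
  calc S.card = ⌈(S.card : ℝ)⌉₊ := (Nat.ceil_natCast _).symm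
    _ ≤ ⌈18 * Real.pi / ((p:ℝ) * s)⌉₊ := Nat.ceil_mono hfinal
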